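/- Let G be an undirected graph, S a set of edges, and X a vertex set of minimum size intersecting all S-cycles that, among minimum-size such sets, contains a maximum number of endpoints of edges in S (a dominant solution). Then every nonempty set Y ⊆ X \ V(S) sees at least |Y| + 2 connected components of G - X - S that contain an endpoint of an edge of S, where Y sees a component K if some vertex of Y is adjacent in G to a vertex of K. -/

import Mathlib

set_option linter.unusedSectionVars false
set_option maxHeartbeats 1000000
namespace SFVSAux
open SimpleGraph

variable {V : Type} [Fintype V] [DecidableEq V]
variable (G : SimpleGraph V) (S : Set (Sym2 V)) (X : Set V)

def Gout : SimpleGraph V where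
  Adj a b := G.Adj a b ∧ a ∉ X ∧ b ∉ X
  symm := ⟨fun _ _ ⟨h, ha, hb⟩ => ⟨h.symm, hb, ha⟩⟩
  loopless := ⟨fun _ ⟨h, _, _⟩ => G.irrefl h⟩

def Gin : SimpleGraph V := (Gout G X).deleteEdges S

abbrev Hgr : SimpleGraph {v : V | v ∉ X} := (G.deleteEdges S).induce {v : V | v ∉ X}

lemma gout_le : Gout G X ≤ G := fun _ _ h => h.1

variable {G S X}

lemma gout_adj {a b : V} :
    (Gout G X).Adj a b ↔ G.Adj a b ∧ a ∉ X ∧ b ∉ X := Iff.rfl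

lemma gin_adj {a b : V} :
    (Gin G S X).Adj a b ↔ (G.Adj a b ∧ a ∉ X ∧ b ∉ X) ∧ s(a, b) ∉ S := by
  simp [Gin, Gout]

lemma gin_le_gout : Gin G S X ≤ Gout G X := fun _ _ h => h.1

lemma delE_mono {D D' : Set (Sym2 V)} (h : D ⊆ D') :
    (Gout G X).deleteEdges D' ≤ (Gout G X).deleteEdges D := by
  intro u v huv
  rw [deleteEdges_adj] at huv ⊢
  exact ⟨huv.1, fun hm => huv.2 (h hm)⟩

lemma mem_support_cases {a b v : V} (p : (Gout G X).Walk a b) (hv : v ∈ p.support) :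
    v = a ∨ v ∉ X := by
  induction p with
  | nil => left; simpa using hv
  | cons h q ih =>
    rw [SimpleGraph.Walk.support_cons, List.mem_cons] at hv
    rcases hv with hv | hv
    · exact Or.inl hv
    · rcases ih hv with rfl | hx
      · exact Or.inr h.2.2
      · exact Or.inr hx

variable (hsol : ∀ (v : V) (c : G.Walk v v), c.IsCycle → (∃ e ∈ c.edges, e ∈ S) →
      ∃ x ∈ X, x ∈ c.support)

include hsol in
/-- There is no `S`-cycle avoiding `X`. -/
lemma no_scycle : ∀ (u : V) (c : (Gout G X).Walk u u), c.IsCycle →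
    ¬ (∃ e ∈ c.edges, e ∈ S) := by
  intro u c hc he
  have hedges : ∀ e ∈ c.edges, e ∈ G.edgeSet := fun e heG =>
    Set.mem_of_subset_of_mem (SimpleGraph.edgeSet_mono (gout_le G X)) (c.edges_subset_edgeSet heG)
  let c' := c.transfer G hedges
  obtain ⟨x, hxX, hxsup⟩ := hsol u c' (hc.transfer _) (by
    rwa [SimpleGraph.Walk.edges_transfer])
  rw [SimpleGraph.Walk.support_transfer] at hxsup
  rcases mem_support_cases c hxsup with rfl | hx
  · cases c with
    | nil => exact hc.ne_nil rfl
    | cons h q => exact h.2.1 hxX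
  · exact hx hxX

include hsol in
/-- Every `S`-edge with both endpoints outside `X` is a bridge of `G - X`. -/
lemma sedge_bridge (hS : S ⊆ G.edgeSet) {c d : V} (hcd : s(c, d) ∈ S)
    (hc : c ∉ X) (hd : d ∉ X) :
    ¬ ((Gout G X).deleteEdges {s(c, d)}).Reachable c d := by
  intro hr
  have hadj : (Gout G X).Adj c d := ⟨(G.mem_edgeSet).1 (hS hcd), hc, hd⟩
  obtain ⟨w, p, hp, hep⟩ :=
    (SimpleGraph.adj_and_reachable_delete_edges_iff_exists_cycle).1 ⟨hadj, hr⟩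
  exact no_scycle hsol w p hp ⟨_, hep, hcd⟩


section C

variable (hsol : ∀ (v : V) (c : G.Walk v v), c.IsCycle → (∃ e ∈ c.edges, e ∈ S) →
      ∃ x ∈ X, x ∈ c.support)
variable (hbr : ∀ {c d : V}, s(c, d) ∈ S → c ∉ X → d ∉ X →
      ¬ ((Gout G X).deleteEdges {s(c, d)}).Reachable c d)

include hbr in
/-- A walk in `G - X` with no repeated edges, containing an `S`-edge, cannot have its
endpoints joined in `G - X - S`. -/
lemma nodup_contra :
    ∀ {a b : V} (p : (Gout G X).Walk a b), p.edges.Nodup →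
      (∃ e ∈ p.edges, e ∈ S) → (Gin G S X).Reachable a b → False := by
  intro a b p
  induction p with
  | nil => rintro _ ⟨e, he, _⟩; simp at he
  | @cons a x b h q ih =>
    intro hnd hse hr
    rw [SimpleGraph.Walk.edges_cons, List.nodup_cons] at hnd
    by_cases hax : s(a, x) ∈ S
    · have hqdel : ((Gout G X).deleteEdges {s(a, x)}).Reachable x b :=
        ⟨q.toDeleteEdges _ (fun e' he' hm => hnd.1 (by
          rw [Set.mem_singleton_iff] at hm; exact hm ▸ he'))⟩
      have hle : Gin G S X ≤ (Gout G X).deleteEdges {s(a, x)} := by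
        intro u v huv
        rw [deleteEdges_adj]
        refine ⟨(gin_adj.mp huv).1, ?_⟩
        rw [Set.mem_singleton_iff]
        intro hEq
        exact (gin_adj.mp huv).2 (hEq ▸ hax)
      exact hbr hax h.2.1 h.2.2 ((hr.mono hle).trans hqdel.symm)
    · have hadj : (Gin G S X).Adj a x := gin_adj.mpr ⟨h, hax⟩
      refine ih hnd.2 ?_ (hadj.symm.reachable.trans hr)
      obtain ⟨e, he, heS⟩ := hse
      rcases List.mem_cons.mp he with rfl | he'
      · exact absurd heS hax
      · exact ⟨e, he', heS⟩

end C

lemma H_walk_to_gin {u v : {v : V | v ∉ X}} (p : (Hgr G S X).Walk u v) :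
    (Gin G S X).Reachable u.1 v.1 := by
  induction p with
  | nil => exact Reachable.refl _
  | @cons a x b h q ih =>
    have hadj : (Gin G S X).Adj a.1 x.1 := by
      have h' : (G.deleteEdges S).Adj a.1 x.1 := h
      rw [deleteEdges_adj] at h'
      exact gin_adj.mpr ⟨⟨h'.1, a.2, x.2⟩, h'.2⟩
    exact hadj.reachable.trans ih

lemma gin_walk_to_H {a b : V} (p : (Gin G S X).Walk a b) :
    ∀ (ha : a ∉ X) (hb : b ∉ X),
      (Hgr G S X).Reachable ⟨a, ha⟩ ⟨b, hb⟩ := by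
  induction p with
  | nil => intro ha hb; exact Reachable.refl _
  | @cons a x b h q ih =>
    intro ha hb
    obtain ⟨⟨hadj, _, hx⟩, hs⟩ := gin_adj.mp h
    have hadj' : (Hgr G S X).Adj ⟨a, ha⟩ ⟨x, hx⟩ := by
      show (G.deleteEdges S).Adj a x
      rw [deleteEdges_adj]; exact ⟨hadj, hs⟩
    exact hadj'.reachable.trans (ih hx hb)

lemma comp_reach {a b : V} (ha : a ∉ X) (hb : b ∉ X) :
    ((Hgr G S X).connectedComponentMk ⟨a, ha⟩ = (Hgr G S X).connectedComponentMk ⟨b, hb⟩) ↔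
      (Gin G S X).Reachable a b := by
  rw [ConnectedComponent.eq]
  constructor
  · rintro ⟨p⟩; exact H_walk_to_gin p
  · rintro ⟨p⟩; exact gin_walk_to_H p ha hb

/-- From the endpoint of a walk in `G - X` containing an `S`-edge, one can reach,
inside `G - X - S`, a vertex incident to an `S`-edge. -/
lemma ends {u v : V} (p : (Gout G X).Walk u v) :
    (∃ e ∈ p.edges, e ∈ S) →
    ∃ c, c ∈ p.support ∧ c ∉ X ∧ (∃ d, s(c, d) ∈ S) ∧ (Gin G S X).Reachable u c := by
  induction p with
  | nil => rintro ⟨e, he, _⟩; simp at he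
  | @cons u x v h q ih =>
    intro hse
    by_cases hux : s(u, x) ∈ S
    · exact ⟨u, SimpleGraph.Walk.start_mem_support _, h.2.1, ⟨x, hux⟩, Reachable.refl _⟩
    · obtain ⟨e, he, heS⟩ := hse
      rw [SimpleGraph.Walk.edges_cons] at he
      have he' : e ∈ q.edges := by
        rcases List.mem_cons.mp he with rfl | he'
        · exact absurd heS hux
        · exact he'
      obtain ⟨c, hcs, hcX, hd, hreach⟩ := ih ⟨e, he', heS⟩
      have hadj : (Gin G S X).Adj u x := gin_adj.mpr ⟨h, hux⟩
      exact ⟨c, by rw [SimpleGraph.Walk.support_cons]; exact List.mem_cons_of_mem _ hcs,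
        hcX, hd, hadj.reachable.trans hreach⟩

/-- Splitting a duplicate-free walk at an edge. -/
lemma sides {G' : SimpleGraph V} {x y : V} :
    ∀ {a b : V} (p : G'.Walk a b), s(x, y) ∈ p.edges → p.edges.Nodup →
    ∃ c d : V, s(c, d) = s(x, y) ∧ (G'.deleteEdges {s(x, y)}).Reachable a c ∧
      (G'.deleteEdges {s(x, y)}).Reachable d b := by
  intro a b p
  induction p with
  | nil => simp
  | @cons a z b h q ih =>
    intro he hnd
    rw [SimpleGraph.Walk.edges_cons, List.nodup_cons] at hnd
    rw [SimpleGraph.Walk.edges_cons] at he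
    rcases List.mem_cons.mp he with heq | hq
    · refine ⟨a, z, heq.symm, Reachable.refl _,
        ⟨q.toDeleteEdges _ (fun e' he' hm => hnd.1 ?_)⟩⟩
      rw [Set.mem_singleton_iff] at hm
      rw [hm, heq] at he'
      exact he'
    · obtain ⟨c, d, hcd, h1, h2⟩ := ih hq hnd.2
      refine ⟨c, d, hcd, (Adj.reachable ?_).trans h1, h2⟩
      rw [deleteEdges_adj]
      refine ⟨h, ?_⟩
      rw [Set.mem_singleton_iff]
      intro hEq
      exact hnd.1 (hEq ▸ hq)


/-- Key cut lemma: marked vertices in pairwise distinct components of `G - X - S` can be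
pairwise separated in `G - X` by deleting at most `|M| - 1` many `S`-edges. -/
lemma cut
    (hbr : ∀ {c d : V}, s(c, d) ∈ S → c ∉ X → d ∉ X →
      ¬ ((Gout G X).deleteEdges {s(c, d)}).Reachable c d) :
    ∀ (n : ℕ) (M : Finset V), M.card ≤ n →
    (∀ a ∈ M, ∀ b ∈ M, a ≠ b → ¬ (Gin G S X).Reachable a b) →
    ∀ (D : Set (Sym2 V)), D ⊆ S →
    ∃ E₀ : Finset (Sym2 V), (E₀.card + 1 ≤ M.card ∨ E₀ = ∅) ∧
      (∀ e ∈ E₀, e ∈ S ∧ ∀ w, w ∈ e → w ∉ X) ∧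
      (∀ a ∈ M, ∀ b ∈ M, a ≠ b →
        ¬ ((Gout G X).deleteEdges (D ∪ ↑E₀)).Reachable a b) := by
  intro n
  induction n with
  | zero =>
    intro M hcard _ D _
    refine ⟨∅, Or.inr rfl, by simp, ?_⟩
    intro a ha _ _ _
    rw [Nat.le_zero, Finset.card_eq_zero] at hcard
    simp [hcard] at ha
  | succ n ih =>
    intro M hcard hpair D hD
    classical
    by_cases hsep : ∀ a ∈ M, ∀ b ∈ M, a ≠ b → ¬ ((Gout G X).deleteEdges D).Reachable a b
    · refine ⟨∅, Or.inr rfl, by simp, ?_⟩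
      simpa using hsep
    · push_neg at hsep
      obtain ⟨a, haM, b, hbM, hab, hreach⟩ := hsep
      obtain ⟨w⟩ := hreach
      have hp : w.bypass.IsPath := w.bypass_isPath
      set p := w.bypass with hpdef
      have hSedge : ∃ e ∈ p.edges, e ∈ S := by
        by_contra hno
        push_neg at hno
        have hE : ∀ e ∈ p.edges, e ∈ (Gin G S X).edgeSet := by
          intro e he
          induction e using Sym2.ind with
          | _ x y =>
            have hadj := p.adj_of_mem_edges he
            rw [deleteEdges_adj] at hadj
            rw [mem_edgeSet]
            exact gin_adj.mpr ⟨hadj.1, hno _ he⟩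
        exact hpair a haM b hbM hab ⟨p.transfer _ hE⟩
      obtain ⟨e, hep, heS⟩ := hSedge
      induction e using Sym2.ind with
      | _ c d =>
      have hadjcd := p.adj_of_mem_edges hep
      rw [deleteEdges_adj] at hadjcd
      have hcX : c ∉ X := hadjcd.1.2.1
      have hdX : d ∉ X := hadjcd.1.2.2
      have hbridge := hbr heS hcX hdX
      -- split p at the edge s(c,d)
      obtain ⟨c', d', hcd', h1, h2⟩ := sides p hep hp.isTrail.edges_nodup
      have hmono1 : ((Gout G X).deleteEdges D).deleteEdges {s(c, d)} ≤
          (Gout G X).deleteEdges {s(c, d)} := by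
        intro u v huv
        rw [deleteEdges_adj] at huv ⊢
        rw [deleteEdges_adj] at huv
        exact ⟨huv.1.1, huv.2⟩
      -- a and b are separated once we further remove s(c,d)
      have hsepab : ¬ ((Gout G X).deleteEdges (D ∪ {s(c, d)})).Reachable a b := by
        intro hr
        have hr' : ((Gout G X).deleteEdges {s(c, d)}).Reachable a b :=
          hr.mono (delE_mono (Set.subset_union_right))
        have h1' := h1.mono hmono1
        have h2' := h2.mono hmono1
        have hcd'' : ((Gout G X).deleteEdges {s(c, d)}).Reachable c' d' :=
          (h1'.symm.trans hr').trans h2'.symm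
        rcases Sym2.eq_iff.mp hcd' with ⟨rfl, rfl⟩ | ⟨rfl, rfl⟩
        · exact hbridge hcd''
        · exact hbridge hcd''.symm
      set del1 := (Gout G X).deleteEdges (D ∪ {s(c, d)}) with hdel1
      set M₁ := M.filter (fun m => del1.Reachable a m) with hM₁
      set M₂ := M \ M₁ with hM₂
      have haM₁ : a ∈ M₁ := Finset.mem_filter.mpr ⟨haM, Reachable.refl _⟩
      have hbM₂ : b ∈ M₂ := Finset.mem_sdiff.mpr ⟨hbM, fun hb' =>
        hsepab (Finset.mem_filter.mp hb').2⟩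
      have hM₁sub : M₁ ⊆ M := Finset.filter_subset _ _
      have hM₂sub : M₂ ⊆ M := Finset.sdiff_subset
      have hM₁lt : M₁.card < M.card :=
        Finset.card_lt_card ((Finset.ssubset_iff_of_subset hM₁sub).mpr
          ⟨b, hbM, (Finset.mem_sdiff.mp hbM₂).2⟩)
      have hM₂lt : M₂.card < M.card :=
        Finset.card_lt_card ((Finset.ssubset_iff_of_subset hM₂sub).mpr
          ⟨a, haM, fun ha' => (Finset.mem_sdiff.mp ha').2 haM₁⟩)
      have hcards : M₂.card = M.card - M₁.card := Finset.card_sdiff_of_subset hM₁sub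
      have hcard1 : M₁.card ≤ M.card := Finset.card_le_card hM₁sub
      have hDe : D ∪ {s(c, d)} ⊆ S := Set.union_subset hD (by simpa using heS)
      obtain ⟨E₁, hE₁card, hE₁prop, hE₁sep⟩ := ih M₁ (by omega)
        (fun x hx y hy => hpair x (hM₁sub hx) y (hM₁sub hy)) (D ∪ {s(c, d)}) hDe
      obtain ⟨E₂, hE₂card, hE₂prop, hE₂sep⟩ := ih M₂ (by omega)
        (fun x hx y hy => hpair x (hM₂sub hx) y (hM₂sub hy)) (D ∪ {s(c, d)}) hDe
      refine ⟨insert (s(c, d)) (E₁ ∪ E₂), ?_, ?_, ?_⟩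
      · left
        have hc1 : E₁.card + 1 ≤ M₁.card := by
          rcases hE₁card with h | h
          · exact h
          · subst h
            simp only [Finset.card_empty]
            have : 0 < M₁.card := Finset.card_pos.mpr ⟨a, haM₁⟩
            omega
        have hc2 : E₂.card + 1 ≤ M₂.card := by
          rcases hE₂card with h | h
          · exact h
          · subst h
            simp only [Finset.card_empty]
            have : 0 < M₂.card := Finset.card_pos.mpr ⟨b, hbM₂⟩
            omega
        have hins := Finset.card_insert_le (s(c, d)) (E₁ ∪ E₂)
        have huni := Finset.card_union_le E₁ E₂
        omega
      · intro e he
        rcases Finset.mem_insert.mp he with rfl | he'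
        · refine ⟨heS, ?_⟩
          intro w hw
          rcases Sym2.mem_iff.mp hw with rfl | rfl
          · exact hcX
          · exact hdX
        · rcases Finset.mem_union.mp he' with h' | h'
          · exact hE₁prop _ h'
          · exact hE₂prop _ h'
      · intro x hx y hy hxy hr
        have hsub1 : (D ∪ {s(c, d)}) ∪ ↑E₁ ⊆ D ∪ ↑(insert (s(c, d)) (E₁ ∪ E₂)) := by
          intro z hz
          simp only [Set.mem_union, Finset.coe_insert, Set.mem_insert_iff,
            Finset.coe_union, Set.mem_singleton_iff, Finset.mem_coe] at hz ⊢
          tauto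
        have hsub2 : (D ∪ {s(c, d)}) ∪ ↑E₂ ⊆ D ∪ ↑(insert (s(c, d)) (E₁ ∪ E₂)) := by
          intro z hz
          simp only [Set.mem_union, Finset.coe_insert, Set.mem_insert_iff,
            Finset.coe_union, Set.mem_singleton_iff, Finset.mem_coe] at hz ⊢
          tauto
        have hsub0 : D ∪ {s(c, d)} ⊆ D ∪ ↑(insert (s(c, d)) (E₁ ∪ E₂)) := by
          intro z hz
          simp only [Set.mem_union, Finset.coe_insert, Set.mem_insert_iff,
            Set.mem_singleton_iff] at hz ⊢
          tauto
        by_cases hx1 : x ∈ M₁ <;> by_cases hy1 : y ∈ M₁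
        · exact hE₁sep x hx1 y hy1 hxy (hr.mono (delE_mono hsub1))
        · have hy2 : y ∈ M₂ := Finset.mem_sdiff.mpr ⟨hy, hy1⟩
          have hr' : del1.Reachable x y := hr.mono (delE_mono hsub0)
          have hax : del1.Reachable a x := (Finset.mem_filter.mp hx1).2
          exact hy1 (Finset.mem_filter.mpr ⟨hy, hax.trans hr'⟩)
        · have hx2 : x ∈ M₂ := Finset.mem_sdiff.mpr ⟨hx, hx1⟩
          have hr' : del1.Reachable x y := hr.mono (delE_mono hsub0)
          have hay : del1.Reachable a y := (Finset.mem_filter.mp hy1).2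
          exact hx1 (Finset.mem_filter.mpr ⟨hx, hay.trans hr'.symm⟩)
        · have hx2 : x ∈ M₂ := Finset.mem_sdiff.mpr ⟨hx, hx1⟩
          have hy2 : y ∈ M₂ := Finset.mem_sdiff.mpr ⟨hy, hy1⟩
          exact hE₂sep x hx2 y hy2 hxy (hr.mono (delE_mono hsub2))


section Extract

variable (Y : Set V)

lemma firstY :
    ∀ {x₀ b : V} (p : G.Walk x₀ b), x₀ ∉ Y → b ∈ Y →
    ∃ (u y : V) (W : G.Walk x₀ u) (h' : G.Adj u y) (rest : G.Walk y b),
      p = W.append (SimpleGraph.Walk.cons h' rest) ∧ y ∈ Y ∧ ∀ v ∈ W.support, v ∉ Y := by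
  intro x₀ b p
  induction p with
  | nil => intro hx hb; exact absurd hb hx
  | @cons x₀ x₁ b h q ih =>
    intro hx hb
    by_cases hx₁ : x₁ ∈ Y
    · exact ⟨x₀, x₁, SimpleGraph.Walk.nil, h, q,
        (SimpleGraph.Walk.nil_append _).symm, hx₁, by simpa using hx⟩
    · obtain ⟨u, y, W, h', rest, heq, hY, hsup⟩ := ih hx₁ hb
      refine ⟨u, y, SimpleGraph.Walk.cons h W, h', rest, ?_, hY, ?_⟩
      · rw [SimpleGraph.Walk.cons_append, heq]
      · intro v hv
        rw [SimpleGraph.Walk.support_cons, List.mem_cons] at hv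
        rcases hv with rfl | hv
        · exact hx
        · exact hsup v hv

lemma extract (hTY : ∀ e ∈ S, ∀ v, v ∈ e → v ∉ Y) :
    ∀ (n : ℕ) {a b : V} (p : G.Walk a b), p.length ≤ n → a ∈ Y → b ∈ Y →
      p.edges.Nodup → (∃ e ∈ p.edges, e ∈ S) →
    ∃ (u u' y y' : V) (W : G.Walk u u'), y ∈ Y ∧ y' ∈ Y ∧ G.Adj y u ∧ G.Adj u' y' ∧
      (∀ v ∈ W.support, v ∉ Y) ∧ (∀ v ∈ W.support, v ∈ p.support) ∧
      W.edges.Nodup ∧ (∃ e ∈ W.edges, e ∈ S) := by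
  intro n
  induction n with
  | zero =>
    intro a b p hlen _ _ _ hse
    cases p with
    | nil => obtain ⟨e, he, _⟩ := hse; simp at he
    | cons h q => simp [SimpleGraph.Walk.length_cons] at hlen
  | succ n ih =>
    intro a b p hlen ha hb hnd hse
    cases p with
    | nil => obtain ⟨e, he, _⟩ := hse; simp at he
    | @cons _ x₀ _ h q =>
      have hhead : s(a, x₀) ∉ S := fun hc => hTY _ hc a (Sym2.mem_mk_left _ _) ha
      rw [SimpleGraph.Walk.edges_cons, List.nodup_cons] at hnd
      rw [SimpleGraph.Walk.length_cons] at hlen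
      have hse' : ∃ e ∈ q.edges, e ∈ S := by
        obtain ⟨e, he, heS⟩ := hse
        rw [SimpleGraph.Walk.edges_cons] at he
        rcases List.mem_cons.mp he with rfl | he'
        · exact absurd heS hhead
        · exact ⟨e, he', heS⟩
      by_cases hx₀ : x₀ ∈ Y
      · obtain ⟨u, u', y, y', W, h1, h2, h3, h4, h5, h6, h7, h8⟩ :=
          ih q (by omega) hx₀ hb hnd.2 hse'
        refine ⟨u, u', y, y', W, h1, h2, h3, h4, h5, ?_, h7, h8⟩
        intro v hv
        rw [SimpleGraph.Walk.support_cons]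
        exact List.mem_cons_of_mem _ (h6 v hv)
      · obtain ⟨u, y, W, h', rest, heq, hy, hWsup⟩ := firstY Y q hx₀ hb
        have hqedges : q.edges = W.edges ++ (s(u, y) :: rest.edges) := by
          rw [heq, SimpleGraph.Walk.edges_append, SimpleGraph.Walk.edges_cons]
        obtain ⟨e, he, heS⟩ := hse'
        rw [hqedges, List.mem_append] at he
        have hndq := hnd.2
        rw [hqedges] at hndq
        rcases he with heW | heR
        · refine ⟨x₀, u, a, y, W, ha, hy, h, h', hWsup, ?_,
            (List.nodup_append.mp hndq).1, ⟨e, heW, heS⟩⟩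
          intro v hv
          rw [SimpleGraph.Walk.support_cons]
          refine List.mem_cons_of_mem _ ?_
          rw [heq]
          exact SimpleGraph.Walk.subset_support_append_left _ _ hv
        · rcases List.mem_cons.mp heR with rfl | heR'
          · exact absurd hy (hTY _ heS y (Sym2.mem_mk_right _ _))
          · have hlen2 : q.length = W.length + (rest.length + 1) := by
              rw [heq, SimpleGraph.Walk.length_append, SimpleGraph.Walk.length_cons]
            have hndrest : rest.edges.Nodup := by
              have := (List.nodup_append.mp hndq).2.1
              exact (List.nodup_cons.mp this).2
            obtain ⟨w1, w2, w3, w4, W', h1, h2, h3, h4, h5, h6, h7, h8⟩ :=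
              ih rest (by omega) hy hb hndrest ⟨e, heR', heS⟩
            refine ⟨w1, w2, w3, w4, W', h1, h2, h3, h4, h5, ?_, h7, h8⟩
            intro v hv
            rw [SimpleGraph.Walk.support_cons]
            refine List.mem_cons_of_mem _ ?_
            rw [heq]
            refine SimpleGraph.Walk.subset_support_append_right _ _ ?_
            rw [SimpleGraph.Walk.support_cons]
            exact List.mem_cons_of_mem _ (h6 v hv)

end Extract

end SFVSAux

open SFVSAux in
/-- Every nonempty set `Y ⊆ X \ V(S)` of a dominant solution `X` sees at least `|Y| + 2`
interesting components of `G - X - S` (components containing an endpoint of an `S`-edge),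
where `Y` sees a component if some vertex of `Y` has a `G`-neighbor in it. -/
theorem stmt1 {V : Type} [Fintype V] [DecidableEq V] (G : SimpleGraph V)
    (S : Set (Sym2 V)) (hS : S ⊆ G.edgeSet) (X : Set V)
    -- X is a solution:
    (hsol : ∀ (v : V) (c : G.Walk v v), c.IsCycle → (∃ e ∈ c.edges, e ∈ S) →
      ∃ x ∈ X, x ∈ c.support)
    -- X has minimum size among solutions:
    (hmin : ∀ X' : Set V,
      (∀ (v : V) (c : G.Walk v v), c.IsCycle → (∃ e ∈ c.edges, e ∈ S) →
        ∃ x ∈ X', x ∈ c.support) → X.ncard ≤ X'.ncard)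
    -- among minimum-size solutions, X contains a maximum number of vertices of T = V(S):
    (hdom : ∀ X' : Set V,
      (∀ (v : V) (c : G.Walk v v), c.IsCycle → (∃ e ∈ c.edges, e ∈ S) →
        ∃ x ∈ X', x ∈ c.support) → X'.ncard = X.ncard →
      (X' ∩ {v : V | ∃ e ∈ S, v ∈ e}).ncard ≤ (X ∩ {v : V | ∃ e ∈ S, v ∈ e}).ncard) :
    letI H := (G.deleteEdges S).induce {v : V | v ∉ X}
    letI cc := H.connectedComponentMk
    ∀ Y : Set V, Y ⊆ X \ {v : V | ∃ e ∈ S, v ∈ e} → Y.Nonempty →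
      Y.ncard + 2 ≤
        {C : H.ConnectedComponent |
          (∃ u : {v : V // v ∉ X}, cc u = C ∧ ∃ e ∈ S, u.1 ∈ e) ∧
          (∃ y ∈ Y, ∃ u : {v : V // v ∉ X}, cc u = C ∧ G.Adj y u.1)}.ncard := by
  classical
  intro Y hYsub hYne
  by_contra hlt
  push_neg at hlt
  set 𝒞set := {C : ((G.deleteEdges S).induce {v : V | v ∉ X}).ConnectedComponent |
          (∃ u : {v : V // v ∉ X},
            ((G.deleteEdges S).induce {v : V | v ∉ X}).connectedComponentMk u = C ∧
              ∃ e ∈ S, u.1 ∈ e) ∧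
          (∃ y ∈ Y, ∃ u : {v : V // v ∉ X},
            ((G.deleteEdges S).induce {v : V | v ∉ X}).connectedComponentMk u = C ∧
              G.Adj y u.1)} with h𝒞
  -- basic facts about Y
  have hYX : Y ⊆ X := fun y hy => (hYsub hy).1
  have hTY : ∀ e ∈ S, ∀ v, v ∈ e → v ∉ Y :=
    fun e heS v hv hvY => (hYsub hvY).2 ⟨e, heS, hv⟩
  have hbr : ∀ {c d : V}, s(c, d) ∈ S → c ∉ X → d ∉ X →
      ¬ ((Gout G X).deleteEdges {s(c, d)}).Reachable c d :=
    fun h hc hd => sedge_bridge hsol hS h hc hd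
  -- representatives of the components in 𝒞set
  have hrep : ∀ C ∈ 𝒞set, ∃ m : V, ∃ hm : m ∉ X,
      ((G.deleteEdges S).induce {v : V | v ∉ X}).connectedComponentMk ⟨m, hm⟩ = C ∧
        (∃ e ∈ S, m ∈ e) := by
    rintro C ⟨⟨u, hu, he⟩, -⟩
    exact ⟨u.1, u.2, by simpa using hu, he⟩
  haveI : Nonempty V := ⟨hYne.some⟩
  choose! rep hrepX hrepC hrepT using hrep
  have hfin : 𝒞set.Finite := Set.toFinite _
  set Mfin : Finset V := hfin.toFinset.image rep with hMdef
  have hinj : Set.InjOn rep hfin.toFinset := by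
    intro C1 hC1 C2 hC2 hEq
    rw [Set.Finite.coe_toFinset] at hC1 hC2
    have h1 := hrepC C1 hC1
    have h2 := hrepC C2 hC2
    rw [← h1, ← h2]
    congr 1
    exact Subtype.ext hEq
  have hMcard : Mfin.card = 𝒞set.ncard := by
    rw [hMdef, Finset.card_image_of_injOn hinj, Set.ncard_eq_toFinset_card 𝒞set hfin]
  have hMX : ∀ m ∈ Mfin, m ∉ X := by
    intro m hm
    obtain ⟨C, hC, rfl⟩ := Finset.mem_image.mp hm
    rw [Set.Finite.mem_toFinset] at hC
    exact hrepX C hC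
  have hMpair : ∀ a ∈ Mfin, ∀ b ∈ Mfin, a ≠ b → ¬ (Gin G S X).Reachable a b := by
    intro a ha b hb hab hr
    obtain ⟨C1, hC1, rfl⟩ := Finset.mem_image.mp ha
    obtain ⟨C2, hC2, rfl⟩ := Finset.mem_image.mp hb
    rw [Set.Finite.mem_toFinset] at hC1 hC2
    apply hab
    have := (comp_reach (hrepX C1 hC1) (hrepX C2 hC2)).mpr hr
    have hc12 : C1 = C2 := by rw [← hrepC C1 hC1, ← hrepC C2 hC2, this]
    rw [hc12]
  -- the cut
  obtain ⟨E₀, hE₀card, hE₀prop, hE₀sep⟩ :=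
    cut (S := S) hbr Mfin.card Mfin le_rfl hMpair ∅ (Set.empty_subset _)
  rw [Set.empty_union] at hE₀sep
  -- pick one endpoint of each cut edge
  have hpickex : ∀ e ∈ E₀, ∃ v : V, v ∈ e := fun e _ => ⟨e.out.1, Sym2.out_fst_mem e⟩
  choose! pick hpick using hpickex
  set Zfin : Finset V := E₀.image pick with hZdef
  have hZX : ∀ z ∈ Zfin, z ∉ X := by
    intro z hz
    obtain ⟨e, he, rfl⟩ := Finset.mem_image.mp hz
    exact (hE₀prop e he).2 _ (hpick e he)
  have hZT : ∀ z ∈ Zfin, ∃ e ∈ S, z ∈ e := by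
    intro z hz
    obtain ⟨e, he, rfl⟩ := Finset.mem_image.mp hz
    exact ⟨e, (hE₀prop e he).1, hpick e he⟩
  set X' : Set V := (X \ Y) ∪ ↑Zfin with hX'def
  -- X' is a solution
  have hsol' : ∀ (v : V) (c : G.Walk v v), c.IsCycle → (∃ e ∈ c.edges, e ∈ S) →
      ∃ x ∈ X', x ∈ c.support := by
    intro v c hcyc hSc
    by_contra hno
    push_neg at hno
    obtain ⟨x₀, hx₀X, hx₀sup⟩ := hsol v c hcyc hSc
    have hx₀Y : x₀ ∈ Y := by
      by_contra hxy
      exact hno x₀ (Or.inl ⟨hx₀X, hxy⟩) hx₀sup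
    have hcyc₂ : (c.rotate x₀ hx₀sup).IsCycle := hcyc.rotate hx₀sup
    set c₂ := c.rotate x₀ hx₀sup with hc₂def
    have hedge₂ : ∀ e, e ∈ c₂.edges ↔ e ∈ c.edges :=
      fun e => (SimpleGraph.Walk.rotate_edges c x₀ hx₀sup).mem_iff
    have hsup₂ : ∀ w, w ∈ c₂.support → w ∈ c.support := by
      intro w hw
      rw [SimpleGraph.Walk.support_eq_cons] at hw
      rcases List.mem_cons.mp hw with rfl | hw
      · exact hx₀sup
      · exact List.mem_of_mem_tail
          (((SimpleGraph.Walk.support_rotate c x₀ hx₀sup).mem_iff).mp hw)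
    have hnd₂ : c₂.edges.Nodup := hcyc₂.edges_nodup
    obtain ⟨u, u', y, y', W, hyY, hy'Y, hyu, hu'y', hWY, hWsub, hWnd, hWS⟩ :=
      extract Y hTY c₂.length c₂ le_rfl hx₀Y hx₀Y hnd₂
        (by obtain ⟨e, he, heS⟩ := hSc; exact ⟨e, (hedge₂ e).mpr he, heS⟩)
    have hWnotX : ∀ w ∈ W.support, w ∉ X ∧ w ∉ (↑Zfin : Set V) := by
      intro w hw
      have hwc : w ∈ c.support := hsup₂ w (hWsub w hw)
      have hwY : w ∉ Y := hWY w hw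
      refine ⟨fun hwX => hno w (Or.inl ⟨hwX, hwY⟩) hwc, fun hwZ => hno w (Or.inr hwZ) hwc⟩
    have hWedges : ∀ e ∈ W.edges, e ∈ (Gout G X).edgeSet := by
      intro e he
      induction e using Sym2.ind with
      | _ p q =>
        rw [SimpleGraph.mem_edgeSet]
        exact ⟨W.adj_of_mem_edges he, (hWnotX p (W.fst_mem_support_of_mem_edges he)).1,
          (hWnotX q (W.snd_mem_support_of_mem_edges he)).1⟩
    set W₀ := W.transfer (Gout G X) hWedges with hW₀def
    have hW₀edges : W₀.edges = W.edges := W.edges_transfer _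
    have hW₀sup : W₀.support = W.support := W.support_transfer _
    have huX : u ∉ X := (hWnotX u W.start_mem_support).1
    have hu'X : u' ∉ X := (hWnotX u' W.end_mem_support).1
    have hW₀S : ∃ e ∈ W₀.edges, e ∈ S := by rw [hW₀edges]; exact hWS
    obtain ⟨c₁, hc₁sup, hc₁X, hd₁, hreach₁⟩ := ends W₀ hW₀S
    obtain ⟨c₁', hc₁sup', hc₁X', hd₁', hreach₁'⟩ := ends W₀.reverse (by
      obtain ⟨e, he, heS⟩ := hW₀S
      exact ⟨e, by rw [SimpleGraph.Walk.edges_reverse]; exact List.mem_reverse.mpr he, heS⟩)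
    set K := ((G.deleteEdges S).induce {v : V | v ∉ X}).connectedComponentMk ⟨u, huX⟩
      with hKdef
    set K' := ((G.deleteEdges S).induce {v : V | v ∉ X}).connectedComponentMk ⟨u', hu'X⟩
      with hK'def
    have hKmem : K ∈ 𝒞set := by
      rw [h𝒞]
      refine ⟨⟨⟨c₁, hc₁X⟩, (comp_reach hc₁X huX).mpr hreach₁.symm, ?_⟩,
        ⟨y, hyY, ⟨u, huX⟩, rfl, hyu⟩⟩
      obtain ⟨d₁, hd⟩ := hd₁
      exact ⟨s(c₁, d₁), hd, Sym2.mem_mk_left _ _⟩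
    have hK'mem : K' ∈ 𝒞set := by
      rw [h𝒞]
      refine ⟨⟨⟨c₁', hc₁X'⟩, (comp_reach hc₁X' hu'X).mpr hreach₁'.symm, ?_⟩,
        ⟨y', hy'Y, ⟨u', hu'X⟩, rfl, hu'y'.symm⟩⟩
      obtain ⟨d₁', hd⟩ := hd₁'
      exact ⟨s(c₁', d₁'), hd, Sym2.mem_mk_left _ _⟩
    by_cases hKK : K = K'
    · have hreach : (Gin G S X).Reachable u u' := (comp_reach huX hu'X).mp hKK
      exact nodup_contra hbr W₀ (by rw [hW₀edges]; exact hWnd) hW₀S hreach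
    · -- the two marks are joined in the cut graph: contradiction
      have hm1X := hrepX K hKmem
      have hm2X := hrepX K' hK'mem
      have hm1M : rep K ∈ Mfin := Finset.mem_image.mpr
        ⟨K, (Set.Finite.mem_toFinset _).mpr hKmem, rfl⟩
      have hm2M : rep K' ∈ Mfin := Finset.mem_image.mpr
        ⟨K', (Set.Finite.mem_toFinset _).mpr hK'mem, rfl⟩
      have hne : rep K ≠ rep K' := by
        intro hEq
        apply hKK
        rw [← hrepC K hKmem, ← hrepC K' hK'mem]
        congr 1
        exact Subtype.ext hEq
      have hle : Gin G S X ≤ (Gout G X).deleteEdges ↑E₀ := by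
        intro a b hab
        obtain ⟨h1, h2⟩ := gin_adj.mp hab
        rw [SimpleGraph.deleteEdges_adj]
        exact ⟨gout_adj.mpr h1, fun hm => h2 ((hE₀prop _ (Finset.mem_coe.mp hm)).1)⟩
      have hr1 : (Gin G S X).Reachable (rep K) u :=
        (comp_reach hm1X huX).mp (by rw [hrepC K hKmem])
      have hr2 : (Gin G S X).Reachable (rep K') u' :=
        (comp_reach hm2X hu'X).mp (by rw [hrepC K' hK'mem])
      have hW₀E₀ : ∀ e ∈ W₀.edges, e ∉ (↑E₀ : Set (Sym2 V)) := by
        intro e he hm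
        rw [Finset.mem_coe] at hm
        have hz : pick e ∈ Zfin := Finset.mem_image.mpr ⟨e, hm, rfl⟩
        have hze : pick e ∈ e := hpick e hm
        rw [hW₀edges] at he
        revert hze
        induction e using Sym2.ind with
        | _ p q =>
          intro hze
          rcases Sym2.mem_iff.mp hze with h1 | h1
          · exact (hWnotX _ (h1 ▸ W.fst_mem_support_of_mem_edges he)).2 (Finset.mem_coe.mpr (h1 ▸ hz))
          · exact (hWnotX _ (h1 ▸ W.snd_mem_support_of_mem_edges he)).2 (Finset.mem_coe.mpr (h1 ▸ hz))
      have hWdel : ((Gout G X).deleteEdges ↑E₀).Reachable u u' :=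
        ⟨W₀.toDeleteEdges _ hW₀E₀⟩
      have hfinal : ((Gout G X).deleteEdges ↑E₀).Reachable (rep K) (rep K') :=
        ((hr1.mono hle).trans hWdel).trans (hr2.mono hle).symm
      exact hE₀sep (rep K) hm1M (rep K') hm2M hne hfinal
  -- now the counting argument
  have hYpos : 0 < Y.ncard := (Set.ncard_pos (Set.toFinite _)).mpr hYne
  have hE₀le : E₀.card ≤ Y.ncard := by
    rcases hE₀card with h | h
    · rw [hMcard] at h; omega
    · simp [h]
  have hZcard : (↑Zfin : Set V).ncard ≤ E₀.card := by
    rw [Set.ncard_coe_finset, hZdef]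
    exact Finset.card_image_le
  have hdisj : Disjoint (X \ Y) (↑Zfin : Set V) := by
    rw [Set.disjoint_left]
    intro z hz hzZ
    exact hZX z (Finset.mem_coe.mp hzZ) hz.1
  have hX'card : X'.ncard = (X \ Y).ncard + (↑Zfin : Set V).ncard := by
    rw [hX'def]
    exact Set.ncard_union_eq hdisj (Set.toFinite _) (Set.toFinite _)
  have hXYcard : (X \ Y).ncard = X.ncard - Y.ncard := Set.ncard_diff hYX (Set.toFinite _)
  have hYle : Y.ncard ≤ X.ncard := Set.ncard_le_ncard hYX (Set.toFinite _)
  have hmin' : X.ncard ≤ X'.ncard := hmin X' hsol'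
  have hX'eq : X'.ncard = X.ncard := by omega
  have hZeq : (↑Zfin : Set V).ncard = Y.ncard := by omega
  have hdom' := hdom X' hsol' hX'eq
  have hXT : X' ∩ {v : V | ∃ e ∈ S, v ∈ e} =
      (X ∩ {v : V | ∃ e ∈ S, v ∈ e}) ∪ ↑Zfin := by
    rw [hX'def]
    ext w
    simp only [Set.mem_inter_iff, Set.mem_union, Set.mem_diff, Set.mem_setOf_eq,
      Finset.mem_coe]
    constructor
    · rintro ⟨hw1 | hw1, hw2⟩
      · exact Or.inl ⟨hw1.1, hw2⟩
      · exact Or.inr hw1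
    · rintro (⟨hw1, hw2⟩ | hw1)
      · have hwY : w ∉ Y := fun hY => (hYsub hY).2 hw2
        exact ⟨Or.inl ⟨hw1, hwY⟩, hw2⟩
      · exact ⟨Or.inr hw1, hZT w hw1⟩
  have hdisj2 : Disjoint (X ∩ {v : V | ∃ e ∈ S, v ∈ e}) (↑Zfin : Set V) := by
    rw [Set.disjoint_left]
    intro z hz hzZ
    exact hZX z (Finset.mem_coe.mp hzZ) hz.1
  rw [hXT, Set.ncard_union_eq hdisj2 (Set.toFinite _) (Set.toFinite _)] at hdom'
  omega
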